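/- For β > 1, the Laplace-type integral ∫_0^∞ I_{0,0}(−x)·e^{−βx} dx = (1/β)·J_0(2/√β), where J_0 is the Bessel function of the first kind of order zero. -/

import Mathlib

open MeasureTheory Set Real

/-- Two-index Humbert-Bessel function with zero indices. -/
noncomputable def humbert00 (x : ℝ) : ℝ := ∑' r : ℕ, x ^ r / (r.factorial : ℝ) ^ 3

/-- The Bessel function of the first kind of order 0. -/
noncomputable def besselJ0 (x : ℝ) : ℝ :=
  ∑' r : ℕ, (-1 : ℝ) ^ r * x ^ (2 * r) / (2 ^ (2 * r) * (r.factorial : ℝ) ^ 2)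

lemma aux_int_pow_exp (n : ℕ) {β : ℝ} (hβ : 0 < β) :
    ∫ x in Set.Ioi (0 : ℝ), x ^ n * Real.exp (-(β * x)) =
      (n.factorial : ℝ) / β ^ (n + 1) := by
  have h := integral_rpow_mul_exp_neg_mul_Ioi (a := (n : ℝ) + 1) (by positivity) hβ
  have heq : ∀ x ∈ Set.Ioi (0 : ℝ),
      x ^ ((n : ℝ) + 1 - 1) * Real.exp (-(β * x)) = x ^ n * Real.exp (-(β * x)) := by
    intro x hx
    rw [add_sub_cancel_right, Real.rpow_natCast]
  rw [setIntegral_congr_fun measurableSet_Ioi heq] at h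
  rw [h, Real.Gamma_nat_eq_factorial]
  rw [show (n : ℝ) + 1 = ((n + 1 : ℕ) : ℝ) by push_cast; ring, Real.rpow_natCast]
  field_simp
  rw [one_div, inv_pow, inv_mul_cancel₀ (pow_ne_zero _ hβ.ne')]

lemma aux_integrable (n : ℕ) {β : ℝ} (hβ : 0 < β) :
    IntegrableOn (fun x : ℝ => x ^ n * Real.exp (-(β * x))) (Set.Ioi 0) := by
  have h := integrableOn_rpow_mul_exp_neg_mul_rpow (p := 1) (s := (n : ℝ)) (b := β)
    (neg_one_lt_zero.trans_le (Nat.cast_nonneg n)) zero_lt_one hβ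
  refine h.congr_fun (fun x hx => ?_) measurableSet_Ioi
  beta_reduce
  rw [Real.rpow_natCast, Real.rpow_one, neg_mul]

theorem humbert_laplace_integral (β : ℝ) (hβ : 1 < β) :
    ∫ x in Set.Ioi (0 : ℝ), humbert00 (-x) * Real.exp (-β * x) =
      (1 / β) * besselJ0 (2 / Real.sqrt β) := by
  have hβ0 : 0 < β := lt_trans one_pos hβ
  set F : ℕ → ℝ → ℝ := fun r x => (-x) ^ r / (r.factorial : ℝ) ^ 3 * Real.exp (-β * x) with hF
  have hF_int : ∀ r : ℕ, Integrable (F r) (volume.restrict (Set.Ioi 0)) := by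
    intro r
    have h2 : IntegrableOn (fun x : ℝ => ((-1 : ℝ) ^ r / (r.factorial : ℝ) ^ 3) *
        (x ^ r * Real.exp (-(β * x)))) (Set.Ioi 0) :=
      (aux_integrable r hβ0).const_mul _
    refine h2.congr_fun (fun x hx => ?_) measurableSet_Ioi
    simp only [hF]
    rw [neg_pow, neg_mul]
    ring
  have hF_norm : ∀ r : ℕ, ∫ x in Set.Ioi (0 : ℝ), ‖F r x‖ =
      1 / ((r.factorial : ℝ) ^ 2 * β ^ (r + 1)) := by
    intro r
    have : ∀ x ∈ Set.Ioi (0 : ℝ),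
        ‖F r x‖ = (1 / (r.factorial : ℝ) ^ 3) * (x ^ r * Real.exp (-(β * x))) := by
      intro x hx
      have hx0 : 0 < x := hx
      rw [hF]
      simp only [norm_div, norm_mul, norm_pow, norm_neg, Real.norm_eq_abs,
        abs_of_pos hx0, abs_of_nonneg (Real.exp_nonneg _),
        abs_of_nonneg (by positivity : (0:ℝ) ≤ (r.factorial : ℝ))]
      rw [neg_mul]
      ring
    rw [setIntegral_congr_fun measurableSet_Ioi this, integral_const_mul,
      aux_int_pow_exp r hβ0]
    have h1 : (0:ℝ) < (r.factorial : ℝ) := by positivity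
    field_simp
  have hF_sum : Summable fun r : ℕ => ∫ x in Set.Ioi (0 : ℝ), ‖F r x‖ := by
    simp_rw [hF_norm]
    apply Summable.of_nonneg_of_le (fun r => by positivity)
      (fun r => ?_) (summable_geometric_of_lt_one (by positivity)
        (inv_lt_one_of_one_lt₀ hβ)
        : Summable fun r : ℕ => (β⁻¹) ^ r)
    have h1 : (1:ℝ) ≤ (r.factorial : ℝ) ^ 2 := by
      have := r.factorial_pos
      have : (1:ℝ) ≤ (r.factorial : ℝ) := by exact_mod_cast this
      nlinarith
    have h2 : β ^ r ≤ (r.factorial : ℝ) ^ 2 * β ^ (r + 1) := by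
      have hβr : (0:ℝ) < β ^ r := by positivity
      calc β ^ r ≤ β ^ (r+1) := by
            apply pow_le_pow_right₀ (le_of_lt hβ) (Nat.le_succ r)
        _ ≤ (r.factorial : ℝ) ^ 2 * β ^ (r + 1) := by nlinarith [pow_pos hβ0 (r+1)]
    rw [inv_pow, ← one_div]
    exact div_le_div_of_nonneg_left zero_le_one (by positivity) h2
  have hswap := integral_tsum_of_summable_integral_norm hF_int hF_sum
  have hpt : ∀ x : ℝ, (∑' r, F r x) = humbert00 (-x) * Real.exp (-β * x) := by
    intro x
    rw [humbert00, ← tsum_mul_right]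
  calc ∫ x in Set.Ioi (0 : ℝ), humbert00 (-x) * Real.exp (-β * x)
      = ∫ x in Set.Ioi (0 : ℝ), ∑' r, F r x := by
        exact integral_congr_ae (Filter.Eventually.of_forall fun x => (hpt x).symm)
    _ = ∑' r, ∫ x in Set.Ioi (0 : ℝ), F r x := hswap.symm
    _ = ∑' r : ℕ, (-1 : ℝ) ^ r / ((r.factorial : ℝ) ^ 2 * β ^ (r + 1)) := by
        refine tsum_congr fun r => ?_
        have : ∀ x ∈ Set.Ioi (0 : ℝ), F r x =
            ((-1 : ℝ) ^ r / (r.factorial : ℝ) ^ 3) * (x ^ r * Real.exp (-(β * x))) := by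
          intro x hx
          simp only [hF]
          rw [neg_pow, neg_mul]
          ring
        rw [setIntegral_congr_fun measurableSet_Ioi this, integral_const_mul,
          aux_int_pow_exp r hβ0]
        have h1 : (0:ℝ) < (r.factorial : ℝ) := by positivity
        field_simp
    _ = (1 / β) * besselJ0 (2 / Real.sqrt β) := by
        rw [besselJ0, ← tsum_mul_left]
        refine tsum_congr fun r => ?_
        have hsq : (2 / Real.sqrt β) ^ (2 * r) = 4 ^ r / β ^ r := by
          rw [pow_mul, show (2 / Real.sqrt β) ^ 2 = 4 / β by
            rw [div_pow, Real.sq_sqrt hβ0.le]; norm_num, div_pow]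
        rw [hsq]
        have h1 : (0:ℝ) < (r.factorial : ℝ) := by positivity
        have : (2:ℝ) ^ (2 * r) = 4 ^ r := by rw [pow_mul]; norm_num
        rw [this]
        field_simp
        ring
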